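/- Let p ∈ ℝ with p ∉ {−(k+1)/2 : k ∈ ℕ₀}, let P = [[κ₁,κ₃],[κ₃,κ₂]] be a real symmetric 2×2 matrix with κ₁ ≠ 0, let ψ ∈ ℝ, and let ((αₙ,βₙ))ₙ≥₀ be the unique solution of the recurrence (R). Then β₁ ≠ 0, and (P,ψ) is recovered from (α₁,β₁),(α₂,β₂) by: κ₁ = β₁(1+2p); κ₂ = −(α₁β₂/β₁²)·2(1+2p) + (α₁²/β₁)(1+2p) + (β₂²/β₁³)(2+2p) − 2α₂/β₁; κ₃ = (β₂/β₁)(2+2p) − α₁(1+2p); ψ = (β₂/β₁²)(2+2p) − (α₁/β₁)·2p. -/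

import Mathlib

open Matrix MeasureTheory Filter

noncomputable section

def matJ : Matrix (Fin 2) (Fin 2) ℝ := !![0, -1; 1, 0]

def Dpsi (p ψ a : ℝ) : Matrix (Fin 2) (Fin 2) ℝ :=
  if p = 0 then !![1, 0; ψ * Real.log a, 1]
  else !![1, 0; ψ / (2 * p), 1] * !![a ^ p, 0; 0, a ^ (-p)] * !![1, 0; -ψ / (2 * p), 1]

def HPpsi (p ψ : ℝ) (P : Matrix (Fin 2) (Fin 2) ℝ) (a : ℝ) : Matrix (Fin 2) (Fin 2) ℝ :=
  Dpsi p ψ a * P * (Dpsi p ψ a)ᵀ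

def SatRec (p : ℝ) (P : Matrix (Fin 2) (Fin 2) ℝ) (ψ : ℝ) (α β : ℕ → ℝ) : Prop :=
  α 0 = 1 ∧ β 0 = 0 ∧ ∀ n : ℕ,
    !![α (n + 1), β (n + 1)] =
      (-1 / (((n : ℝ) + 1) * (2 * p + (n : ℝ) + 1))) •
        (!![α n, β n] * (P * matJ * !![2 * p + (n : ℝ) + 1, 0; ψ, (n : ℝ) + 1]))

def genF (c : ℕ → ℝ) (z : ℂ) : ℂ := ∑' n : ℕ, (c n : ℂ) * z ^ n

def rowAB (p ψ : ℝ) (α β : ℕ → ℝ) (a : ℝ) (z : ℂ) : Matrix (Fin 1) (Fin 2) ℂ :=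
  !![((a ^ p : ℝ) : ℂ) * genF α ((a : ℂ) * z), ((a ^ p : ℝ) : ℂ) * genF β ((a : ℂ) * z)] *
    ((Dpsi p ψ a)⁻¹).map Complex.ofReal

/-- recovery of the parameters (P,ψ) from the first two terms of
the solution of the recurrence. -/
theorem statement6 (p : ℝ) (hp : ∀ k : ℕ, p ≠ -((k : ℝ) + 1) / 2)
    (κ1 κ2 κ3 ψ : ℝ) (hκ1 : κ1 ≠ 0) (α β : ℕ → ℝ)
    (hrec : SatRec p !![κ1, κ3; κ3, κ2] ψ α β) :
    β 1 ≠ 0 ∧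
    κ1 = β 1 * (1 + 2 * p) ∧
    κ2 = -(α 1 * β 2 / (β 1) ^ 2) * (2 * (1 + 2 * p)) + (α 1) ^ 2 / β 1 * (1 + 2 * p)
        + (β 2) ^ 2 / (β 1) ^ 3 * (2 + 2 * p) - 2 * α 2 / β 1 ∧
    κ3 = β 2 / β 1 * (2 + 2 * p) - α 1 * (1 + 2 * p) ∧
    ψ = β 2 / (β 1) ^ 2 * (2 + 2 * p) - α 1 / β 1 * (2 * p) := by
  obtain ⟨ha0, hb0, hR⟩ := hrec
  have h0 := hR 0
  have h1 := hR 1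
  have ea1 := congrFun (congrFun h0 0) 0
  have eb1 := congrFun (congrFun h0 0) 1
  have ea2 := congrFun (congrFun h1 0) 0
  have eb2 := congrFun (congrFun h1 0) 1
  simp [Matrix.mul_apply, matJ, Fin.sum_univ_succ, ha0, hb0] at ea1 eb1 ea2 eb2
  have h21 : 2 * p + 1 ≠ 0 := by
    have := hp 0; intro h; apply this; push_cast; linarith
  have h22 : 2 * p + 2 ≠ 0 := by
    have := hp 1; intro h; apply this; push_cast; linarith
  have hden : ((1 : ℝ) + 1) * (2 * p + 1 + 1) ≠ 0 := by
    intro h; apply h22; linarith [mul_eq_zero.mp h]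
  clear h0 h1 hR
  have h22' : 2 * p + 1 + 1 ≠ 0 := by
    intro h; apply h22; linarith
  field_simp at ea1 eb1 ea2 eb2
  have hb1 : β 1 ≠ 0 := by
    intro h; apply hκ1; rw [h] at eb1; linarith
  have hps : β 1 * ψ = α 1 + κ3 := by
    apply mul_left_cancel₀ h21
    linear_combination ψ * eb1 - ea1
  refine ⟨hb1, ?_, ?_, ?_, ?_⟩
  · linear_combination -eb1
  · field_simp
    apply mul_right_cancel₀ h22
    linear_combination (β 1 ^ 2) * ea2 +
      (2 * (2 * p + 1) * α 1 * β 1 - (2 * p + 2) * β 2 - α 1 * κ1 - κ3 * β 1) * eb2 +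
      (α 1 * κ1 * β 1 + κ3 * β 1 ^ 2) * hps +
      (α 1 ^ 2 * (κ1 + (2 * p + 1) * β 1) - 2 * (2 * p + 1) * α 1 ^ 2 * β 1
        + α 1 * κ3 * β 1 - α 1 ^ 2 * β 1) * eb1
  · field_simp
    linear_combination α 1 * eb1 - eb2
  · field_simp
    linear_combination β 1 * hps + α 1 * eb1 - eb2
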